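/- Let p be a prime and let X be a scheme over 𝔽_p. Then the absolute Frobenius F_X : X → X is a universal homeomorphism: for every scheme T and every morphism g : T → X, the base change of F_X along g, i.e., the second projection pr : T ×_{g,X,F_X} X → T, induces a homeomorphism on underlying topological spaces. In Mathlib terms, F_X satisfies (MorphismProperty.topologically IsHomeomorph).universally. -/

import Mathlib

/-- The `p`-th power map as a ring homomorphism, on a commutative ring in which `p = 0`
(`p` a prime). -/
def pthPowerHom {p : ℕ} (hp : p.Prime) (R : Type*) [CommRing R] (h : (p : R) = 0) :
    R →+* R where
  toFun x := x ^ p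
  map_one' := one_pow p
  map_mul' x y := mul_pow x y p
  map_zero' := zero_pow hp.ne_zero
  map_add' x y := by
    show (x + y) ^ p = x ^ p + y ^ p
    obtain ⟨r, hr⟩ := exists_add_pow_prime_eq hp x y
    rw [hr, h, zero_mul, zero_mul, zero_mul, add_zero]

open AlgebraicGeometry CategoryTheory TopologicalSpace Opposite Limits

/-- The absolute Frobenius morphism of a scheme over `𝔽_p`: it is the identity on the
underlying topological space and raises sections of the structure sheaf to the `p`-th
power. -/
noncomputable def absFrob (p : ℕ) (hp : p.Prime) (X : Scheme)
    (hX : ∀ U : X.Opens, (p : Γ(X, U)) = 0) : X ⟶ X :=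
  Scheme.Hom.mk
    { base := 𝟙 X.toPresheafedSpace.carrier
      c :=
        { app := fun U => CommRingCat.ofHom (pthPowerHom hp _ (hX U.unop))
          naturality := by
            intro U V f
            ext x
            show pthPowerHom hp _ (hX V.unop) (X.presheaf.map f x)
              = X.presheaf.map f (pthPowerHom hp _ (hX U.unop) x)
            show (X.presheaf.map f x) ^ p = X.presheaf.map f (x ^ p)
            rw [map_pow] }
      prop := by
        intro x
        dsimp only
        refine ⟨fun a ha => ?_⟩
        obtain ⟨U, hxU, s, rfl⟩ := TopCat.Presheaf.exists_germ_eq X.presheaf a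
        erw [PresheafedSpace.stalkMap_germ_apply] at ha
        dsimp only at ha
        replace ha : IsUnit ((X.presheaf.germ U x hxU) (s ^ p)) := ha
        rw [map_pow] at ha
        exact (isUnit_pow_iff hp.ne_zero).mp ha }


lemma char_of_hom {p : ℕ} {A B : Scheme} (u : A ⟶ B)
    (hB : ∀ U : B.Opens, (p : Γ(B, U)) = 0) (V : A.Opens) : (p : Γ(A, V)) = 0 := by
  have h1 : (p : Γ(A, ⊤)) = 0 := by
    have := congrArg (u.appTop) (hB ⊤)
    rwa [map_natCast, map_zero] at this
  have := congrArg (A.presheaf.map (homOfLE (le_top (a := V))).op) h1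
  rwa [map_natCast, map_zero] at this

lemma absFrob_base (p : ℕ) (hp : p.Prime) (X : Scheme)
    (hX : ∀ U : X.Opens, (p : Γ(X, U)) = 0) (x : X) : (absFrob p hp X hX).base x = x := rfl

lemma absFrob_naturality {p : ℕ} (hp : p.Prime) {A B : Scheme} (u : A ⟶ B)
    (hA : ∀ U : A.Opens, (p : Γ(A, U)) = 0) (hB : ∀ U : B.Opens, (p : Γ(B, U)) = 0) :
    u ≫ absFrob p hp B hB = absFrob p hp A hA ≫ u := by
  have hbase : (u ≫ absFrob p hp B hB).base = (absFrob p hp A hA ≫ u).base := rfl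
  apply Scheme.Hom.ext hbase
  intro U
  simp only [eqToHom_op, eqToHom_map]
  ext x
  show u.app _ (x ^ p) = (u.app U x) ^ p
  rw [map_pow]

/-- The scheme case of Lemma 3.1 of the paper: the absolute Frobenius of a scheme over
`𝔽_p` is a universal homeomorphism, i.e. every base change of it induces a homeomorphism
on underlying topological spaces. -/
theorem absFrob_universal_homeomorphism (p : ℕ) (hp : p.Prime)
    (X : Scheme) (hX : ∀ U : X.Opens, (p : Γ(X, U)) = 0) :
    (AlgebraicGeometry.topologically @IsHomeomorph).universally (absFrob p hp X hX) := by
  intro X' Y' i₁ i₂ f' H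
  have hY' : ∀ V : Y'.Opens, (p : Γ(Y', V)) = 0 := char_of_hom i₂ hX
  have hX' : ∀ V : X'.Opens, (p : Γ(X', V)) = 0 := char_of_hom i₁ hX
  obtain ⟨w, hw1, hw2⟩ : ∃ w : Y' ⟶ X', w ≫ i₁ = i₂ ∧ w ≫ f' = absFrob p hp Y' hY' :=
    ⟨H.lift (absFrob p hp Y' hY') i₂ (absFrob_naturality hp i₂ hY' hX).symm,
      H.lift_snd _ _ _, H.lift_fst _ _ _⟩
  have hfw : f' ≫ w = absFrob p hp X' hX' := by
    apply H.hom_ext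
    · rw [Category.assoc, hw2, absFrob_naturality hp f' hX' hY']
    · rw [Category.assoc, hw1, H.w, absFrob_naturality hp i₁ hX' hX]
  show IsHomeomorph f'.base
  refine isHomeomorph_iff_exists_inverse.mpr ⟨f'.continuous, w.base, ?_, ?_, w.continuous⟩
  · intro x
    have := congrArg (fun m : X' ⟶ X' => m.base x) hfw
    simpa [absFrob_base] using this
  · intro y
    have := congrArg (fun m : Y' ⟶ Y' => m.base y) hw2
    simpa [absFrob_base] using this
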